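/- Let ρ ∈ E be nonzero, let α ∈ E satisfy ⟨α, ρ⟩ > 0, and let K > 0. Then there exist C > 0 and θ₀ ∈ (0,1) such that for every θ ∈ (0, θ₀] and all vectors a, b ∈ E satisfying ‖a‖ ≥ θ^{−2}, ‖a − b‖ ≤ K, and ∠(a, ρ) ≤ θ, one has ⟨α, a⟩ > 0 and |⟨α, b⟩/⟨α, a⟩ − 1| ≤ C·θ. -/

import Mathlib

open RealInnerProductSpace

private lemma aux_ratio (K A c t : ℝ) (hc : c ≠ 0) (ht : t ≠ 0) :
    2 * K * A / c * t * (c / 2 * (t ^ 2)⁻¹) = K * A / t := by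
  field_simp

private lemma aux_mul (K A t : ℝ) (hK : 0 < K) (hA : 0 < A) (ht0 : 0 < t) (ht1 : t ≤ 1) :
    A * K ≤ K * A / t := by
  rw [le_div_iff₀ ht0]
  nlinarith [mul_le_mul_of_nonneg_left ht1 (le_of_lt (mul_pos hA hK))]

/-- If `ρ ≠ 0`, `⟨α,ρ⟩ > 0` and `K > 0`, then there are `C > 0` and `θ₀ ∈ (0,1)` such
that for all `θ ∈ (0, θ₀]` and all `a, b` with `‖a‖ ≥ θ⁻²`, `‖a - b‖ ≤ K` and
`∠(a,ρ) ≤ θ`, one has `⟨α,a⟩ > 0` and `|⟨α,b⟩/⟨α,a⟩ − 1| ≤ Cθ`. -/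
theorem inner_ratio_close_to_one {E : Type*} [NormedAddCommGroup E]
    [InnerProductSpace ℝ E] [FiniteDimensional ℝ E]
    (ρ : E) (hρ : ρ ≠ 0) (α : E) (hα : 0 < ⟪α, ρ⟫) (K : ℝ) (hK : 0 < K) :
    ∃ C > (0 : ℝ), ∃ θ₀ ∈ Set.Ioo (0 : ℝ) 1, ∀ θ ∈ Set.Ioc (0 : ℝ) θ₀, ∀ a b : E,
      θ ^ (-2 : ℤ) ≤ ‖a‖ → ‖a - b‖ ≤ K → InnerProductGeometry.angle a ρ ≤ θ →
      0 < ⟪α, a⟫ ∧ |⟪α, b⟫ / ⟪α, a⟫ - 1| ≤ C * θ := by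
  have hα0 : α ≠ 0 := by rintro rfl; simp at hα
  have hαn : 0 < ‖α‖ := norm_pos_iff.mpr hα0
  have hρn : 0 < ‖ρ‖ := norm_pos_iff.mpr hρ
  set c' : ℝ := ⟪α, ρ⟫ / ‖ρ‖ with hc'
  have hc'pos : 0 < c' := div_pos hα hρn
  refine ⟨2 * K * ‖α‖ / c', by positivity,
    min (1/2) (c' / (c' + 2 * ‖α‖)), ⟨?_, ?_⟩, ?_⟩
  · exact lt_min (by norm_num) (by positivity)
  · exact lt_of_le_of_lt (min_le_left _ _) (by norm_num)
  intro θ hθ a b hna hab hang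
  obtain ⟨hθ0, hθm⟩ := hθ
  have hθhalf : θ ≤ 1/2 := hθm.trans (min_le_left _ _)
  have hθ1 : θ ≤ 1 := hθhalf.trans (by norm_num)
  have hθc : θ ≤ c' / (c' + 2 * ‖α‖) := hθm.trans (min_le_right _ _)
  have hθc' : θ * c' + 2 * (θ * ‖α‖) ≤ c' := by
    calc θ * c' + 2 * (θ * ‖α‖) = θ * (c' + 2 * ‖α‖) := by ring
      _ ≤ c' := by rw [← le_div_iff₀ (by positivity)]; exact hθc
  have hzp : θ ^ (-2 : ℤ) = (θ ^ 2)⁻¹ := by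
    rw [zpow_neg]; norm_num [zpow_ofNat]
  have hinv : 0 < (θ ^ 2)⁻¹ := by positivity
  have hna' : (θ ^ 2)⁻¹ ≤ ‖a‖ := hzp ▸ hna
  have hn : 0 < ‖a‖ := lt_of_lt_of_le hinv hna'
  have ha0 : a ≠ 0 := norm_pos_iff.mp hn
  set φ := InnerProductGeometry.angle a ρ with hφ
  have hφ0 : 0 ≤ φ := InnerProductGeometry.angle_nonneg a ρ
  have hcos : Real.cos φ = ⟪a, ρ⟫ / (‖a‖ * ‖ρ‖) := InnerProductGeometry.cos_angle a ρ
  have hip : ⟪a, ρ⟫ = Real.cos φ * (‖a‖ * ‖ρ‖) := by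
    rw [hcos]; field_simp
  -- decomposition
  set w : E := a - (⟪a, ρ⟫ / ‖ρ‖ ^ 2) • ρ with hwdef
  have hαa : ⟪α, a⟫ = (⟪a, ρ⟫ / ‖ρ‖ ^ 2) * ⟪α, ρ⟫ + ⟪α, w⟫ := by
    simp [hwdef, inner_sub_right, real_inner_smul_right]
  have hwsq : ‖w‖ ^ 2 = ‖a‖ ^ 2 - ⟪a, ρ⟫ ^ 2 / ‖ρ‖ ^ 2 := by
    have h1 : ‖w‖ ^ 2 = ⟪w, w⟫ := (real_inner_self_eq_norm_sq w).symm
    have h2 : ⟪ρ, ρ⟫ = ‖ρ‖ ^ 2 := real_inner_self_eq_norm_sq ρ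
    have h3 : ⟪a, a⟫ = ‖a‖ ^ 2 := real_inner_self_eq_norm_sq a
    rw [h1]
    simp only [hwdef, inner_sub_left, inner_sub_right, real_inner_smul_left,
      real_inner_smul_right, h2, h3, real_inner_comm ρ a]
    field_simp
    ring
  -- sin bound
  have hsin : Real.sin φ ≤ θ := (Real.sin_le hφ0).trans hang
  have hsin0 : 0 ≤ Real.sin φ := Real.sin_nonneg_of_nonneg_of_le_pi hφ0
    (InnerProductGeometry.angle_le_pi a ρ)
  have hρne : (‖ρ‖:ℝ) ≠ 0 := ne_of_gt hρn
  have hpyth : Real.sin φ ^ 2 = 1 - Real.cos φ ^ 2 := by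
    nlinarith [Real.sin_sq_add_cos_sq φ]
  have h4 : ‖w‖ ^ 2 = ‖a‖ ^ 2 * Real.sin φ ^ 2 := by
    rw [hwsq, hip, hpyth]; field_simp
  have hwle : ‖w‖ ≤ ‖a‖ * θ := by
    have hs2 : Real.sin φ ^ 2 ≤ θ ^ 2 := pow_le_pow_left₀ hsin0 hsin 2
    have hsq : ‖w‖ ^ 2 ≤ (‖a‖ * θ) ^ 2 := by
      calc ‖w‖ ^ 2 = ‖a‖ ^ 2 * Real.sin φ ^ 2 := h4
        _ ≤ ‖a‖ ^ 2 * θ ^ 2 := mul_le_mul_of_nonneg_left hs2 (by positivity)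
        _ = (‖a‖ * θ) ^ 2 := by ring
    exact (pow_le_pow_iff_left₀ (norm_nonneg w) (by positivity) (by norm_num)).mp hsq
  -- lower bound on ⟪α, a⟫
  have hcosθ : 1 - θ ^ 2 / 2 ≤ Real.cos φ := by
    have h5 : 1 - φ ^ 2 / 2 ≤ Real.cos φ := Real.one_sub_sq_div_two_le_cos
    have h6 : φ ^ 2 ≤ θ ^ 2 := pow_le_pow_left₀ hφ0 hang 2
    linarith
  have hαw : -(‖α‖ * ‖w‖) ≤ ⟪α, w⟫ := by
    have := abs_real_inner_le_norm α w
    have := abs_le.mp this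
    linarith [this.1]
  have hlow : c' / 2 * ‖a‖ ≤ ⟪α, a⟫ := by
    have hterm : ⟪a, ρ⟫ / ‖ρ‖ ^ 2 * ⟪α, ρ⟫ = Real.cos φ * ‖a‖ * c' := by
      rw [hip, hc']; field_simp
    rw [hαa, hterm]
    have h6 : -(‖α‖ * (‖a‖ * θ)) ≤ ⟪α, w⟫ := by
      refine le_trans ?_ hαw
      have : ‖α‖ * ‖w‖ ≤ ‖α‖ * (‖a‖ * θ) := by
        exact mul_le_mul_of_nonneg_left hwle (norm_nonneg α)
      linarith
    have hθsq : θ ^ 2 ≤ θ := by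
      calc θ ^ 2 = θ * θ := sq θ
        _ ≤ 1 * θ := mul_le_mul_of_nonneg_right hθ1 hθ0.le
        _ = θ := one_mul θ
    have hcos2 : 1 - θ / 2 ≤ Real.cos φ := by linarith
    have hcc : c' / 2 ≤ Real.cos φ * c' - ‖α‖ * θ := by
      have hmul : (1 - θ / 2) * c' ≤ Real.cos φ * c' :=
        mul_le_mul_of_nonneg_right hcos2 hc'pos.le
      have hexp : (1 - θ / 2) * c' = c' - θ * c' / 2 := by ring
      linarith
    linarith [mul_le_mul_of_nonneg_right hcc hn.le, h6]
  have hpos : 0 < ⟪α, a⟫ := lt_of_lt_of_le (by positivity) hlow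
  refine ⟨hpos, ?_⟩
  have hlow2 : c' / 2 * (θ ^ 2)⁻¹ ≤ ⟪α, a⟫ := by
    refine le_trans ?_ hlow
    exact mul_le_mul_of_nonneg_left hna' (by positivity)
  have hdiff : |⟪α, b⟫ - ⟪α, a⟫| ≤ ‖α‖ * K := by
    have h7 : ⟪α, b⟫ - ⟪α, a⟫ = ⟪α, b - a⟫ := by
      rw [inner_sub_right]
    rw [h7]
    refine (abs_real_inner_le_norm α (b - a)).trans ?_
    have : ‖b - a‖ = ‖a - b‖ := norm_sub_rev b a
    exact mul_le_mul_of_nonneg_left (this ▸ hab) (norm_nonneg α)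
  have hθne : θ ≠ 0 := ne_of_gt hθ0
  have hc'ne : c' ≠ 0 := ne_of_gt hc'pos
  have heq : ⟪α, b⟫ / ⟪α, a⟫ - 1 = (⟪α, b⟫ - ⟪α, a⟫) / ⟪α, a⟫ := by
    rw [sub_div, div_self (ne_of_gt hpos)]
  rw [heq, abs_div, abs_of_pos hpos, div_le_iff₀ hpos]
  calc |⟪α, b⟫ - ⟪α, a⟫| ≤ ‖α‖ * K := hdiff
    _ ≤ 2 * K * ‖α‖ / c' * θ * (c' / 2 * (θ ^ 2)⁻¹) := by
        rw [aux_ratio K ‖α‖ c' θ hc'ne hθne]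
        exact aux_mul K ‖α‖ θ hK hαn hθ0 hθ1
    _ ≤ 2 * K * ‖α‖ / c' * θ * ⟪α, a⟫ := by
        exact mul_le_mul_of_nonneg_left hlow2 (by positivity)
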